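/- Let X and Y be tame M-sets. There is a bijection of underlying sets X ⊠ Y ≅ X × Y that is natural with respect to M-equivariant maps in the variable Y. -/

import Mathlib

open Function

/-- The injection monoid `M`: injective self-maps of `ℕ` under composition. -/
def M : Submonoid (Function.End ℕ) where
  carrier := {f | Function.Injective f}
  mul_mem' := fun hf hg => hf.comp hg
  one_mem' := fun _ _ h => h

/-- An element `x` of an `M`-set is supported on `A ⊆ ℕ` if every `f ∈ M`
fixing `A` elementwise satisfies `f • x = x`. -/
def SuppOn {W : Type*} [MulAction M W] (x : W) (A : Set ℕ) : Prop :=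
  ∀ f : M, (∀ a ∈ A, f.1 a = a) → f • x = x

/-- An element is finitely supported if it is supported on some finite set. -/
def FinSupp {W : Type*} [MulAction M W] (x : W) : Prop :=
  ∃ A : Finset ℕ, SuppOn x ↑A

open Classical in
/-- The support: intersection of all finite supporting sets, or `Set.univ`
if the element is not finitely supported. -/
noncomputable def supp {W : Type*} [MulAction M W] (x : W) : Set ℕ :=
  if FinSupp x then ⋂₀ {A : Set ℕ | A.Finite ∧ SuppOn x A} else Set.univ

/-- The box product `X ⊠ Y` as a subset of `X × Y`: pairs with disjoint supports. -/
def BoxSet (X Y : Type*) [MulAction M X] [MulAction M Y] : Set (X × Y) :=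
  {p | Disjoint (supp p.1) (supp p.2)}

lemma M_mul_apply (f g : M) (n : ℕ) : (f * g).1 n = f.1 (g.1 n) := rfl

lemma M_inj (f : M) : Function.Injective f.1 := f.2

/-- Extend a partial injection on a finite set to a global injection. -/
lemma exists_extend (T : Finset ℕ) (v : ℕ → ℕ) (hv : Set.InjOn v ↑T) :
    ∃ g : M, ∀ t ∈ T, g.1 t = v t := by
  classical
  have hD : (↑(T.image v) : Set ℕ)ᶜ.Infinite :=
    Set.Finite.infinite_compl (T.image v).finite_toSet
  set emb := hD.natEmbedding with hemb
  refine ⟨⟨fun n => if n ∈ T then v n else (emb n : ℕ), ?_⟩, ?_⟩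
  · intro a b hab
    by_cases ha : a ∈ T <;> by_cases hb : b ∈ T <;> simp only [ha, hb, if_pos, if_neg,
      if_true, if_false] at hab
    · exact hv ha hb hab
    · exfalso; have := (emb b).2
      rw [← hab] at this
      exact this (by exact Finset.mem_coe.2 (Finset.mem_image_of_mem v ha))
    · exfalso; have := (emb a).2
      rw [hab] at this
      exact this (by exact Finset.mem_coe.2 (Finset.mem_image_of_mem v hb))
    · exact emb.injective (Subtype.val_injective hab)
  · intro t ht; simp [ht]

lemma invFun_injOn_image (r : M) (U : Finset ℕ) :
    Set.InjOn (invFun r.1) ↑(U.image r.1) := by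
  intro a ha b hb hab
  replace ha := Finset.mem_image.1 (show a ∈ U.image r.1 from ha)
  replace hb := Finset.mem_image.1 (show b ∈ U.image r.1 from hb)
  obtain ⟨a', _, rfl⟩ := ha
  obtain ⟨b', _, rfl⟩ := hb
  rw [leftInverse_invFun r.2 a', leftInverse_invFun r.2 b'] at hab
  rw [hab]

lemma smul_cancel {W : Type*} [MulAction M W] (tame : ∀ w : W, FinSupp w)
    (r : M) {z1 z2 : W} (h : r • z1 = r • z2) : z1 = z2 := by
  obtain ⟨U1, hU1⟩ := tame z1
  obtain ⟨U2, hU2⟩ := tame z2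
  obtain ⟨s, hs⟩ := exists_extend ((U1 ∪ U2).image r.1) (invFun r.1)
    (invFun_injOn_image r (U1 ∪ U2))
  have hfix : ∀ t ∈ U1 ∪ U2, (s * r).1 t = t := by
    intro t ht
    have : (s * r).1 t = invFun r.1 (r.1 t) := hs _ (Finset.mem_image_of_mem _ ht)
    rw [this, leftInverse_invFun r.2 t]
  calc z1 = (s * r) • z1 := (hU1 (s*r) fun a ha => hfix a (Finset.mem_union_left _ ha)).symm
    _ = s • (r • z1) := mul_smul s r z1
    _ = s • (r • z2) := by rw [h]
    _ = (s * r) • z2 := (mul_smul s r z2).symm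
    _ = z2 := hU2 (s*r) fun a ha => hfix a (Finset.mem_union_right _ ha)

/-- If two injections agree on a finite support of `y`, they act equally on `y`. -/
lemma smul_eq_of_agree {W : Type*} [MulAction M W] (tame : ∀ w : W, FinSupp w)
    {y : W} {T : Finset ℕ} (hT : SuppOn y ↑T) {p q : M}
    (h : ∀ t ∈ T, p.1 t = q.1 t) : p • y = q • y := by
  obtain ⟨r, hr⟩ := exists_extend (T.image p.1) (invFun p.1) (invFun_injOn_image p T)
  have h1 : (r * p) • y = y := by
    refine hT _ fun t ht => ?_
    have : (r * p).1 t = invFun p.1 (p.1 t) := hr _ (Finset.mem_image_of_mem _ ht)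
    rw [this, leftInverse_invFun p.2 t]
  have h2 : (r * q) • y = y := by
    refine hT _ fun t ht => ?_
    have : (r * q).1 t = r.1 (q.1 t) := rfl
    rw [this, ← h t ht]
    have : r.1 (p.1 t) = invFun p.1 (p.1 t) := hr _ (Finset.mem_image_of_mem _ ht)
    rw [this, leftInverse_invFun p.2 t]
  refine smul_cancel tame r ?_
  rw [← mul_smul, ← mul_smul, h1, h2]

lemma suppOn_smul_image {W : Type*} [MulAction M W] (tame : ∀ w : W, FinSupp w)
    {y : W} {T : Finset ℕ} (hT : SuppOn y ↑T) (h : M) :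
    SuppOn (h • y) ↑(T.image h.1) := by
  intro g hg
  rw [← mul_smul]
  exact smul_eq_of_agree tame hT fun t ht =>
    hg (h.1 t) (Finset.mem_coe.2 (Finset.mem_image_of_mem _ ht))

lemma suppOn_inter {W : Type*} [MulAction M W] (tame : ∀ w : W, FinSupp w)
    {y : W} {A B : Finset ℕ} (hA : SuppOn y ↑A) (hB : SuppOn y ↑B) :
    SuppOn y ↑(A ∩ B) := by
  classical
  intro f hf
  -- fresh zone D, avoiding A, B, f '' B
  have hDfin : ((↑A ∪ ↑B ∪ f.1 '' ↑B : Set ℕ)).Finite :=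
    ((A.finite_toSet.union B.finite_toSet).union (B.finite_toSet.image f.1))
  have hD : ((↑A ∪ ↑B ∪ f.1 '' ↑B : Set ℕ))ᶜ.Infinite := hDfin.infinite_compl
  set emb := hD.natEmbedding with hembdef
  set v : ℕ → ℕ := fun n => if n ∈ B then n else (emb n : ℕ) with hv
  have hvD : ∀ n ∉ B, (v n) ∈ (↑A ∪ ↑B ∪ f.1 '' ↑B : Set ℕ)ᶜ := by
    intro n hn; simp only [hv, if_neg hn]; exact (emb n).2

  have hvinj : Set.InjOn v ↑(A ∪ B) := by
    intro a _ b _ hab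
    by_cases haB : a ∈ B <;> by_cases hbB : b ∈ B <;>
      simp only [hv, haB, hbB, if_pos, if_neg, if_true, if_false] at hab
    · exact hab
    · have h2 := (emb b).2
      rw [← hab] at h2
      exact absurd (Set.mem_union_left _ (Set.mem_union_right _ (Finset.mem_coe.2 haB))) h2
    · have h2 := (emb a).2
      rw [hab] at h2
      exact absurd (Set.mem_union_left _ (Set.mem_union_right _ (Finset.mem_coe.2 hbB))) h2
    · exact emb.injective (Subtype.val_injective hab)

  obtain ⟨h, hh⟩ := exists_extend (A ∪ B) v hvinj
  have hhB : ∀ b ∈ B, h.1 b = b := by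
    intro b hb
    rw [hh b (Finset.mem_union_right _ hb), hv]; simp [hb]
  have hy : h • y = y := hB h fun b hb => hhB b hb
  have hC : SuppOn y ↑(A.image h.1) := by
    have := suppOn_smul_image tame hA h
    rwa [hy] at this
  -- build g agreeing with f on B and fixing the image of A under h
  set vg : ℕ → ℕ := fun n => if n ∈ B then f.1 n else n with hvg
  have hCmem : ∀ c ∈ A.image h.1, c ∉ B → c ∈ (↑A ∪ ↑B ∪ f.1 '' ↑B : Set ℕ)ᶜ := by
    intro c hc hcB
    obtain ⟨a, haA, rfl⟩ := Finset.mem_image.1 hc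
    by_cases haB : a ∈ B
    · rw [hhB a haB] at hcB; exact absurd haB hcB
    · rw [hh a (Finset.mem_union_left _ haA)]
      exact hvD a haB
  have hvginj : Set.InjOn vg ↑(B ∪ A.image h.1) := by
    intro a ha b hb hab
    simp only [Finset.coe_union, Set.mem_union, Finset.mem_coe] at ha hb
    by_cases haB : a ∈ B <;> by_cases hbB : b ∈ B <;>
      simp only [hvg, haB, hbB, if_pos, if_neg, if_true, if_false] at hab
    · exact f.2 hab
    · -- f a = b, b ∈ image, b ∉ B : contradiction
      have hbC : b ∈ A.image h.1 := hb.resolve_left hbB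
      have := hCmem b hbC hbB
      exact absurd (Or.inr ⟨a, haB, hab⟩) this
    · have haC : a ∈ A.image h.1 := ha.resolve_left haB
      have := hCmem a haC haB
      exact absurd (Or.inr ⟨b, hbB, hab.symm⟩) this
    · exact hab
  obtain ⟨g, hg⟩ := exists_extend (B ∪ A.image h.1) vg hvginj
  have hgB : ∀ b ∈ B, g.1 b = f.1 b := by
    intro b hb
    rw [hg b (Finset.mem_union_left _ hb), hvg]; simp [hb]
  have hgC : ∀ c ∈ A.image h.1, g.1 c = c := by
    intro c hc
    obtain ⟨a, haA, rfl⟩ := Finset.mem_image.1 hc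
    by_cases haB : a ∈ B
    · rw [hhB a haB]
      rw [hg a (Finset.mem_union_left _ haB), hvg]
      simp only [if_pos haB]
      exact hf a (Finset.mem_coe.2 (Finset.mem_inter.2 ⟨haA, haB⟩))
    · have hcD : h.1 a ∈ (↑A ∪ ↑B ∪ f.1 '' ↑B : Set ℕ)ᶜ := by
        rw [hh a (Finset.mem_union_left _ haA)]
        exact hvD a haB
      have hcB : h.1 a ∉ B := fun hmem =>
        hcD (Set.mem_union_left _ (Set.mem_union_right _ (Finset.mem_coe.2 hmem)))
      rw [hg _ (Finset.mem_union_right _ hc), hvg]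
      simp [hcB]
  have h1 : g • y = y := hC g fun c hc => hgC c hc
  have h2 : g • y = f • y := smul_eq_of_agree tame hB hgB
  rw [← h2, h1]

lemma suppOn_mono {W : Type*} [MulAction M W] {y : W} {A B : Set ℕ}
    (hA : SuppOn y A) (hAB : A ⊆ B) : SuppOn y B :=
  fun f hf => hA f fun a ha => hf a (hAB ha)

lemma supp_subset {W : Type*} [MulAction M W] {y : W} (hy : FinSupp y)
    {A : Set ℕ} (hAfin : A.Finite) (hA : SuppOn y A) : supp y ⊆ A := by
  rw [supp, if_pos hy]
  exact Set.sInter_subset_of_mem ⟨hAfin, hA⟩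

/-- The least support: `supp y` is a finite supporting set. -/
lemma supp_spec {W : Type*} [MulAction M W] (tame : ∀ w : W, FinSupp w) (y : W) :
    ∃ T : Finset ℕ, supp y = ↑T ∧ SuppOn y ↑T := by
  classical
  have hy := tame y
  have hex : ∃ n, ∃ T : Finset ℕ, T.card = n ∧ SuppOn y ↑T := by
    obtain ⟨T, hT⟩ := hy
    exact ⟨T.card, T, rfl, hT⟩
  obtain ⟨T₀, hT₀card, hT₀⟩ := Nat.find_spec hex
  have hmin : ∀ A : Finset ℕ, SuppOn y ↑A → T₀ ⊆ A := by
    intro A hA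
    have hint : SuppOn y ↑(T₀ ∩ A) := suppOn_inter tame hT₀ hA
    have hle : Nat.find hex ≤ (T₀ ∩ A).card := Nat.find_min' hex ⟨_, rfl, hint⟩
    rw [← hT₀card] at hle
    have heq : T₀ ∩ A = T₀ :=
      Finset.eq_of_subset_of_card_le (Finset.inter_subset_left) hle
    intro t ht
    rw [← heq] at ht
    exact (Finset.mem_inter.1 ht).2
  refine ⟨T₀, ?_, hT₀⟩
  rw [supp, if_pos hy]
  apply Set.Subset.antisymm
  · exact Set.sInter_subset_of_mem ⟨T₀.finite_toSet, hT₀⟩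
  · refine Set.subset_sInter fun A ⟨hAfin, hA⟩ => ?_
    have : SuppOn y ↑hAfin.toFinset := by rwa [Set.Finite.coe_toFinset]
    have := hmin _ this
    intro t ht
    have h3 := this ht
    rwa [Set.Finite.mem_toFinset hAfin] at h3

/-- An injection with range the complement of a finite set. -/
lemma exists_range_compl {S : Set ℕ} (hS : S.Finite) : ∃ f : M, Set.range f.1 = Sᶜ := by
  classical
  have hinf : Sᶜ.Infinite := hS.infinite_compl
  haveI := hinf.to_subtype
  haveI : Denumerable ↥(Sᶜ) := Nat.Subtype.denumerable _
  set e := Denumerable.eqv ↥(Sᶜ)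
  refine ⟨⟨fun n => (e.symm n : ℕ), Subtype.val_injective.comp e.symm.injective⟩, ?_⟩
  have : Set.range (fun n => (e.symm n : ℕ)) = Subtype.val '' Set.range e.symm := by
    rw [← Set.range_comp]; rfl
  rw [this, Equiv.range_eq_univ, Set.image_univ, Subtype.range_coe]

section Main
variable {X : Type} [MulAction M X]

lemma box_mem (fx : X → M) (hfx : ∀ x, Set.range (fx x).1 = (supp x)ᶜ)
    {Y : Type} [MulAction M Y] (tY : ∀ y : Y, FinSupp y) (x : X) (y : Y) :
    (x, fx x • y) ∈ BoxSet X Y := by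
  obtain ⟨T, hTs, hT⟩ := supp_spec tY y
  have hsub : supp (fx x • y) ⊆ ↑(T.image (fx x).1) :=
    supp_subset (tY _) (T.image (fx x).1).finite_toSet (suppOn_smul_image tY hT (fx x))
  have hsub2 : (↑(T.image (fx x).1) : Set ℕ) ⊆ (supp x)ᶜ := by
    rw [← hfx x]
    intro t ht
    obtain ⟨a, _, rfl⟩ := Finset.mem_image.1 (Finset.mem_coe.1 ht)
    exact ⟨a, rfl⟩
  rw [BoxSet, Set.mem_setOf_eq, Set.disjoint_left]
  intro a ha ha2
  exact hsub2 (hsub ha2) ha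

lemma box_bij (fx : X → M) (hfx : ∀ x, Set.range (fx x).1 = (supp x)ᶜ)
    {Y : Type} [MulAction M Y] (tY : ∀ y : Y, FinSupp y) :
    Function.Bijective (fun p : X × Y =>
      (⟨(p.1, fx p.1 • p.2), box_mem fx hfx tY p.1 p.2⟩ : BoxSet X Y)) := by
  constructor
  · rintro ⟨x1, y1⟩ ⟨x2, y2⟩ hpq
    rw [Subtype.ext_iff, Prod.ext_iff] at hpq
    obtain ⟨h1, h2⟩ := hpq
    simp only at h1 h2
    subst h1
    exact Prod.ext rfl (smul_cancel tY (fx x1) h2)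
  · rintro ⟨⟨x, y⟩, hq⟩
    obtain ⟨T, hTs, hT⟩ := supp_spec tY y
    have hrange : ∀ t ∈ T, (t : ℕ) ∈ Set.range (fx x).1 := by
      intro t ht
      rw [hfx x]
      have hts : (t : ℕ) ∈ supp y := by rw [hTs]; exact ht
      exact fun hc => (Set.disjoint_left.1 hq hc) hts
    have hvinj : Set.InjOn (invFun (fx x).1) ↑T := by
      intro a ha b hb hab
      have ha' := invFun_eq (hrange a ha)
      have hb' := invFun_eq (hrange b hb)
      rw [← ha', ← hb', hab]
    obtain ⟨g, hg⟩ := exists_extend T (invFun (fx x).1) hvinj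
    have key : fx x • (g • y) = y := by
      rw [← mul_smul]
      refine hT _ fun t ht => ?_
      have : (fx x * g).1 t = (fx x).1 (g.1 t) := rfl
      rw [this, hg t ht, invFun_eq (hrange t ht)]
    exact ⟨(x, g • y), Subtype.ext (Prod.ext rfl key)⟩

noncomputable def boxEquiv (fx : X → M) (hfx : ∀ x, Set.range (fx x).1 = (supp x)ᶜ)
    {Y : Type} [MulAction M Y] (tY : ∀ y : Y, FinSupp y) : BoxSet X Y ≃ (X × Y) :=
  (Equiv.ofBijective _ (box_bij fx hfx tY)).symm

lemma boxEquiv_eq_iff (fx : X → M) (hfx : ∀ x, Set.range (fx x).1 = (supp x)ᶜ)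
    {Y : Type} [MulAction M Y] (tY : ∀ y : Y, FinSupp y)
    (q : BoxSet X Y) (z : X × Y) :
    boxEquiv fx hfx tY q = z ↔ (q : X × Y) = (z.1, fx z.1 • z.2) := by
  rw [boxEquiv, Equiv.symm_apply_eq, Subtype.ext_iff]
  rfl

/-- For a tame `M`-set `X`, there is a bijection of underlying sets `X ⊠ Y ≅ X × Y`,
natural with respect to `M`-equivariant maps in the variable `Y` (ranging over all
tame `M`-sets `Y`). -/
theorem box_bijective_to_prod_natural_in_Y {X : Type} [MulAction M X]
    (hX : ∀ x : X, FinSupp x) :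
    ∃ e : ∀ (Y : Type) [MulAction M Y], (∀ y : Y, FinSupp y) → (BoxSet X Y ≃ (X × Y)),
      ∀ (Y Y' : Type) [MulAction M Y] [MulAction M Y']
        (tY : ∀ y : Y, FinSupp y) (tY' : ∀ y : Y', FinSupp y)
        (u : Y → Y'), (∀ (f : M) (y : Y), u (f • y) = f • u y) →
        ∀ (p : BoxSet X Y) (q : BoxSet X Y'),
          (q : X × Y') = (p.1.1, u p.1.2) →
          e Y' tY' q = Prod.map id u (e Y tY p) := by
  classical
  have hsuppX : ∀ x : X, ∃ f : M, Set.range f.1 = (supp x)ᶜ := by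
    intro x
    obtain ⟨T, hT, _⟩ := supp_spec hX x
    exact exists_range_compl (hT ▸ T.finite_toSet)
  choose fx hfx using hsuppX
  refine ⟨fun Y _ tY => boxEquiv fx hfx tY, ?_⟩
  intro Y Y' _ _ tY tY' u hu p q hq
  set z := boxEquiv fx hfx tY p with hz
  have hzp : (p : X × Y) = (z.1, fx z.1 • z.2) := (boxEquiv_eq_iff fx hfx tY p z).1 rfl
  rw [show Prod.map id u z = (z.1, u z.2) from rfl]
  rw [boxEquiv_eq_iff]
  rw [hq]
  have h1 : p.1.1 = z.1 := by rw [hzp]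
  have h2 : p.1.2 = fx z.1 • z.2 := by rw [hzp]
  rw [h1, h2, hu]
end Main
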